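/- arXiv:1802.00377 — 2 statements merged into one kernel-verified Lean document; each statement's English description precedes it below -/
import Mathlib

section
/- Let N ≥ 1, let μ be a Radon measure on ℝ^N, let g : ℝ^N → [0,∞] be Borel measurable, and let V₁, V₂ ⊆ ℝ^N be disjoint nonempty open sets. Suppose the weak stability inequality holds on V₁ ∪ V₂: for every C¹ function φ with compact support contained in V₁ ∪ V₂ and with ∫ φ dμ = 0, one has ∫ g φ² dμ ≤ ∫ |∇φ|² dμ. Then for at least one j ∈ {1,2}, the strong stability inequality holds on V_j: ∫ g φ² dμ ≤ ∫ |∇φ|² dμ for every C¹ function φ with compact support contained in V_j, without any zero-average restriction. -/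
open MeasureTheory Metric Set
open scoped ENNReal

noncomputable section

abbrev En (N : ℕ) := EuclideanSpace ℝ (Fin N)

/-- The strong stability inequality on `W`: `∫ g φ² dμ ≤ ∫ |∇φ|² dμ` for every `C¹`
function `φ` with compact support contained in `W`. -/
def strongStab (N : ℕ) (μ : Measure (En N)) (g : En N → ℝ≥0∞) (W : Set (En N)) : Prop :=
  ∀ φ : En N → ℝ, ContDiff ℝ 1 φ → HasCompactSupport φ → tsupport φ ⊆ W →
    (∫⁻ x, g x * ENNReal.ofReal (φ x ^ 2) ∂μ)
      ≤ ∫⁻ x, ENNReal.ofReal (‖fderiv ℝ φ x‖ ^ 2) ∂μ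

/-- The weak stability inequality on `W`: as `strongStab`, but only for test functions
with `∫ φ dμ = 0`. -/
def weakStab (N : ℕ) (μ : Measure (En N)) (g : En N → ℝ≥0∞) (W : Set (En N)) : Prop :=
  ∀ φ : En N → ℝ, ContDiff ℝ 1 φ → HasCompactSupport φ → tsupport φ ⊆ W →
    (∫ x, φ x ∂μ) = 0 →
    (∫⁻ x, g x * ENNReal.ofReal (φ x ^ 2) ∂μ)
      ≤ ∫⁻ x, ENNReal.ofReal (‖fderiv ℝ φ x‖ ^ 2) ∂μ

section Aux

variable {N : ℕ} (μ : Measure (En N))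

lemma fderiv_eq_zero_of_nmem_tsupport {f : En N → ℝ} {x : En N}
    (hx : x ∉ tsupport f) : fderiv ℝ f x = 0 := by
  have := support_fderiv_subset ℝ (f := f)
  by_contra h
  exact hx (this (by simpa [Function.mem_support] using h))

lemma pointwise_sq {φ₁ φ₂ : En N → ℝ}
    (hdisj : Disjoint (tsupport φ₁) (tsupport φ₂)) (a b : ℝ) (x : En N) :
    ENNReal.ofReal ((a * φ₁ x + b * φ₂ x) ^ 2)
      = ENNReal.ofReal (a ^ 2) * ENNReal.ofReal (φ₁ x ^ 2)
        + ENNReal.ofReal (b ^ 2) * ENNReal.ofReal (φ₂ x ^ 2) := by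
  by_cases hx : x ∈ tsupport φ₁
  · have h2 : φ₂ x = 0 := image_eq_zero_of_notMem_tsupport (disjoint_left.mp hdisj hx)
    rw [h2, ← ENNReal.ofReal_mul (sq_nonneg a), ← ENNReal.ofReal_mul (sq_nonneg b)]
    ring_nf
    simp
  · have h1 : φ₁ x = 0 := image_eq_zero_of_notMem_tsupport hx
    rw [h1, ← ENNReal.ofReal_mul (sq_nonneg a), ← ENNReal.ofReal_mul (sq_nonneg b)]
    ring_nf
    simp

lemma pointwise_grad {φ₁ φ₂ : En N → ℝ}
    (hc₁ : ContDiff ℝ 1 φ₁) (hc₂ : ContDiff ℝ 1 φ₂)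
    (hdisj : Disjoint (tsupport φ₁) (tsupport φ₂)) (a b : ℝ) (x : En N) :
    ENNReal.ofReal (‖fderiv ℝ (fun y => a * φ₁ y + b * φ₂ y) x‖ ^ 2)
      = ENNReal.ofReal (a ^ 2) * ENNReal.ofReal (‖fderiv ℝ φ₁ x‖ ^ 2)
        + ENNReal.ofReal (b ^ 2) * ENNReal.ofReal (‖fderiv ℝ φ₂ x‖ ^ 2) := by
  have hd₁ : DifferentiableAt ℝ φ₁ x := (hc₁.differentiable one_ne_zero) x
  have hd₂ : DifferentiableAt ℝ φ₂ x := (hc₂.differentiable one_ne_zero) x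
  have hder : fderiv ℝ (fun y => a * φ₁ y + b * φ₂ y) x
      = a • fderiv ℝ φ₁ x + b • fderiv ℝ φ₂ x := by
    rw [fderiv_fun_add ((hd₁.const_mul a)) ((hd₂.const_mul b)),
      fderiv_const_mul hd₁ a, fderiv_const_mul hd₂ b]
  have hsm : ∀ (c : ℝ) (L : En N →L[ℝ] ℝ), ‖c • L‖ ^ 2 = c ^ 2 * ‖L‖ ^ 2 := by
    intro c L
    rw [norm_smul c L, Real.norm_eq_abs, mul_pow, sq_abs]
  by_cases hx : x ∈ tsupport φ₁
  · have h2 : fderiv ℝ φ₂ x = 0 :=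
      fderiv_eq_zero_of_nmem_tsupport (disjoint_left.mp hdisj hx)
    rw [hder, h2, smul_zero, add_zero, hsm,
      ENNReal.ofReal_mul (sq_nonneg a)]
    simp
  · have h1 : fderiv ℝ φ₁ x = 0 := fderiv_eq_zero_of_nmem_tsupport hx
    rw [hder, h1, smul_zero, zero_add, hsm,
      ENNReal.ofReal_mul (sq_nonneg b)]
    simp

end Aux

/-- **Weak stability implies strong stability in one of two disjoint open sets**
(Remark 2.6 of the paper). -/
theorem weak_stability_dichotomy
    (N : ℕ) (hN : 1 ≤ N) (μ : Measure (En N)) [IsLocallyFiniteMeasure μ]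
    (g : En N → ℝ≥0∞) (hg : Measurable g)
    (V₁ V₂ : Set (En N)) (h1 : IsOpen V₁) (h2 : IsOpen V₂)
    (hd : Disjoint V₁ V₂) (hne1 : V₁.Nonempty) (hne2 : V₂.Nonempty)
    (hweak : weakStab N μ g (V₁ ∪ V₂)) :
    strongStab N μ g V₁ ∨ strongStab N μ g V₂ := by
  by_contra hcon
  push_neg at hcon
  obtain ⟨hns1, hns2⟩ := hcon
  simp only [strongStab, not_forall] at hns1 hns2
  obtain ⟨φ₁, hc₁, hk₁, hs₁, hA₁⟩ := hns1
  obtain ⟨φ₂, hc₂, hk₂, hs₂, hA₂⟩ := hns2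
  push_neg at hA₁ hA₂
  -- abbreviations
  set I₁ := ∫⁻ x, g x * ENNReal.ofReal (φ₁ x ^ 2) ∂μ with hI₁
  set I₂ := ∫⁻ x, g x * ENNReal.ofReal (φ₂ x ^ 2) ∂μ with hI₂
  set J₁ := ∫⁻ x, ENNReal.ofReal (‖fderiv ℝ φ₁ x‖ ^ 2) ∂μ with hJ₁
  set J₂ := ∫⁻ x, ENNReal.ofReal (‖fderiv ℝ φ₂ x‖ ^ 2) ∂μ with hJ₂
  have hdisj : Disjoint (tsupport φ₁) (tsupport φ₂) :=
    hd.mono hs₁ hs₂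
  -- measurability facts
  have hmφ₁ : Measurable fun x => ENNReal.ofReal (φ₁ x ^ 2) :=
    ((hc₁.continuous.pow 2).measurable).ennreal_ofReal
  have hmφ₂ : Measurable fun x => ENNReal.ofReal (φ₂ x ^ 2) :=
    ((hc₂.continuous.pow 2).measurable).ennreal_ofReal
  have hcf₁ : Continuous fun x => fderiv ℝ φ₁ x := hc₁.continuous_fderiv one_ne_zero
  have hcf₂ : Continuous fun x => fderiv ℝ φ₂ x := hc₂.continuous_fderiv one_ne_zero
  have hmg₁ : Measurable fun x => ENNReal.ofReal (‖fderiv ℝ φ₁ x‖ ^ 2) :=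
    ((hcf₁.norm.pow 2).measurable).ennreal_ofReal
  have hmg₂ : Measurable fun x => ENNReal.ofReal (‖fderiv ℝ φ₂ x‖ ^ 2) :=
    ((hcf₂.norm.pow 2).measurable).ennreal_ofReal
  -- integrability of φ₁, φ₂
  have hint₁ : Integrable φ₁ μ := hc₁.continuous.integrable_of_hasCompactSupport hk₁
  have hint₂ : Integrable φ₂ μ := hc₂.continuous.integrable_of_hasCompactSupport hk₂
  -- the master estimate: for all a b with zero total average
  have master : ∀ a b : ℝ, a * ∫ x, φ₁ x ∂μ + b * ∫ x, φ₂ x ∂μ = 0 →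
      ENNReal.ofReal (a ^ 2) * I₁ + ENNReal.ofReal (b ^ 2) * I₂
        ≤ ENNReal.ofReal (a ^ 2) * J₁ + ENNReal.ofReal (b ^ 2) * J₂ := by
    intro a b hab
    set φ : En N → ℝ := fun x => a * φ₁ x + b * φ₂ x with hφ
    have hcφ : ContDiff ℝ 1 φ :=
      (contDiff_const.mul hc₁).add (contDiff_const.mul hc₂)
    have hkφ : HasCompactSupport φ := by
      apply HasCompactSupport.add
      · exact (hk₁.mul_left : HasCompactSupport fun x => a * φ₁ x)
      · exact (hk₂.mul_left : HasCompactSupport fun x => b * φ₂ x)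
    have hsφ : tsupport φ ⊆ V₁ ∪ V₂ := by
      refine (tsupport_add _ _).trans ?_
      gcongr
      · exact (tsupport_mul_subset_right (f := fun _ => a) (g := φ₁)).trans hs₁
      · exact (tsupport_mul_subset_right (f := fun _ => b) (g := φ₂)).trans hs₂
    have hintφ : (∫ x, φ x ∂μ) = 0 := by
      rw [hφ]
      rw [integral_add (hint₁.const_mul a) (hint₂.const_mul b),
        integral_const_mul, integral_const_mul]
      exact hab
    have hw := hweak φ hcφ hkφ hsφ hintφ
    have hl : (∫⁻ x, g x * ENNReal.ofReal (φ x ^ 2) ∂μ)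
        = ENNReal.ofReal (a ^ 2) * I₁ + ENNReal.ofReal (b ^ 2) * I₂ := by
      have : ∀ x, g x * ENNReal.ofReal (φ x ^ 2)
          = ENNReal.ofReal (a ^ 2) * (g x * ENNReal.ofReal (φ₁ x ^ 2))
            + ENNReal.ofReal (b ^ 2) * (g x * ENNReal.ofReal (φ₂ x ^ 2)) := by
        intro x
        rw [show φ x = a * φ₁ x + b * φ₂ x from rfl, pointwise_sq hdisj a b x]
        ring
      simp only [this]
      rw [lintegral_add_left (f := fun x => ENNReal.ofReal (a ^ 2) * (g x * ENNReal.ofReal (φ₁ x ^ 2))) (measurable_const.mul (hg.mul hmφ₁)),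
        lintegral_const_mul (f := fun x => g x * ENNReal.ofReal (φ₁ x ^ 2)) _ (hg.mul hmφ₁), lintegral_const_mul (f := fun x => g x * ENNReal.ofReal (φ₂ x ^ 2)) _ (hg.mul hmφ₂)]
    have hr : (∫⁻ x, ENNReal.ofReal (‖fderiv ℝ φ x‖ ^ 2) ∂μ)
        = ENNReal.ofReal (a ^ 2) * J₁ + ENNReal.ofReal (b ^ 2) * J₂ := by
      have : ∀ x, ENNReal.ofReal (‖fderiv ℝ φ x‖ ^ 2)
          = ENNReal.ofReal (a ^ 2) * ENNReal.ofReal (‖fderiv ℝ φ₁ x‖ ^ 2)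
            + ENNReal.ofReal (b ^ 2) * ENNReal.ofReal (‖fderiv ℝ φ₂ x‖ ^ 2) :=
        pointwise_grad hc₁ hc₂ hdisj a b
      simp only [this]
      rw [lintegral_add_left (f := fun x => ENNReal.ofReal (a ^ 2) * ENNReal.ofReal (‖fderiv ℝ φ₁ x‖ ^ 2)) (measurable_const.mul hmg₁),
        lintegral_const_mul _ hmg₁, lintegral_const_mul _ hmg₂]
    rw [hl, hr] at hw
    exact hw
  -- finiteness
  have hJ₁fin : J₁ ≠ ∞ := hA₁.ne_top
  have hJ₂fin : J₂ ≠ ∞ := hA₂.ne_top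
  -- choose a = ∫φ₂, b = -∫φ₁
  set c₁ := ∫ x, φ₁ x ∂μ with hc₁'
  set c₂ := ∫ x, φ₂ x ∂μ with hc₂'
  have key := master c₂ (-c₁) (by ring)
  by_cases h2z : c₂ = 0
  · -- then also use (a,b) = (1,0) if c₁ = 0, else (a,b)=(0, anything nonzero)? Use b=1.
    by_cases h1z : c₁ = 0
    · have key' := master 1 0 (by rw [h1z, h2z]; ring)
      simp only [one_pow, ENNReal.ofReal_one, one_mul, ne_eq, OfNat.ofNat_ne_zero,
        not_false_eq_true, zero_pow, ENNReal.ofReal_zero, zero_mul, add_zero] at key'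
      exact absurd key' (not_le.mpr hA₁)
    · -- c₂ = 0, c₁ ≠ 0 : use (a,b) = (0,1)
      have key' := master 0 1 (by rw [h2z]; ring)
      simp only [one_pow, ENNReal.ofReal_one, one_mul, ne_eq, OfNat.ofNat_ne_zero,
        not_false_eq_true, zero_pow, ENNReal.ofReal_zero, zero_mul, zero_add] at key'
      exact absurd key' (not_le.mpr hA₂)
  · -- c₂ ≠ 0: in `key`, the coefficient of the first slot is positive
    have hs0 : ENNReal.ofReal (c₂ ^ 2) ≠ 0 := by
      simp [ENNReal.ofReal_eq_zero, not_le, pow_pos, abs_pos]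
      positivity
    have hsfin : ENNReal.ofReal (c₂ ^ 2) ≠ ∞ := ENNReal.ofReal_ne_top
    have hlt1 : ENNReal.ofReal (c₂ ^ 2) * J₁ < ENNReal.ofReal (c₂ ^ 2) * I₁ :=
      ENNReal.mul_lt_mul_right hs0 hsfin hA₁
    have hle2 : ENNReal.ofReal ((-c₁) ^ 2) * J₂ ≤ ENNReal.ofReal ((-c₁) ^ 2) * I₂ :=
      mul_le_mul_right hA₂.le _
    have hfin2 : ENNReal.ofReal ((-c₁) ^ 2) * J₂ ≠ ∞ := ENNReal.mul_ne_top ENNReal.ofReal_ne_top hJ₂fin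
    have : ENNReal.ofReal (c₂ ^ 2) * J₁ + ENNReal.ofReal ((-c₁) ^ 2) * J₂
        < ENNReal.ofReal (c₂ ^ 2) * I₁ + ENNReal.ofReal ((-c₁) ^ 2) * I₂ :=
      ENNReal.add_lt_add_of_lt_of_le hfin2 hlt1 hle2
    exact absurd key (not_le.mpr this)
end
end

section
/- Let N ≥ 1 and let n ≥ 2 be an integer, Λ > 0, and let μ be a Radon measure on ℝ^N satisfying μ(B_r(x)) ≤ Λ rⁿ for every x ∈ ℝ^N and every r ∈ (0,1]. Let g : ℝ^N → [0,∞] be Borel measurable, p ∈ ℝ^N, and R ∈ (0,1]. Suppose the weak stability inequality holds on B_R(p): for every C¹ function φ with compact support contained in B_R(p) and with ∫ φ dμ = 0, one has ∫ g φ² dμ ≤ ∫ |∇φ|² dμ. Then there exists r ∈ (0, R) such that the strong stability inequality holds on B_r(p): ∫ g φ² dμ ≤ ∫ |∇φ|² dμ for every C¹ function φ with compact support contained in B_r(p). -/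
open MeasureTheory Metric Set
open scoped ENNReal

noncomputable section

/-- cancellation helper in `ℝ≥0∞`. -/
lemma ennreal_cancel {a b c d t : ℝ≥0∞} (ht : t ≠ ⊤) (hba : b < a)
    (h : c + t * a ≤ d + t * b) : c ≤ d := by
  rcases eq_or_ne (t * a) ⊤ with hta | hta
  · have hb : b ≠ ⊤ := hba.ne_top
    have htb : t * b ≠ ⊤ := ENNReal.mul_ne_top ht hb
    have : d + t * b = ⊤ := by
      refine top_unique ?_
      calc (⊤ : ℝ≥0∞) = c + t * a := by rw [hta, add_top]
        _ ≤ d + t * b := h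
    have hd : d = ⊤ := by
      rcases ENNReal.add_eq_top.1 this with h' | h'
      · exact h'
      · exact absurd h' htb
    simp [hd]
  · have h2 : c + t * a ≤ d + t * a :=
      h.trans (add_le_add_right (mul_le_mul_right hba.le t) d)
    exact (ENNReal.add_le_add_iff_right hta).1 h2

/-- bound on the derivative of the smooth transition function. -/
lemma exists_smoothTransition_deriv_bound :
    ∃ K : ℝ, 0 ≤ K ∧ ∀ t : ℝ, |deriv Real.smoothTransition t| ≤ K := by
  have hcd : ContDiff ℝ 2 Real.smoothTransition := Real.smoothTransition.contDiff
  have hcont : Continuous (deriv Real.smoothTransition) :=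
    hcd.continuous_deriv (by norm_num)
  have hsupp : HasCompactSupport (deriv Real.smoothTransition) := by
    refine HasCompactSupport.intro (isCompact_Icc (a := (0:ℝ)) (b := 1)) ?_
    intro t ht
    rcases not_and_or.1 ht with h0 | h1
    · push_neg at h0
      have hev : Real.smoothTransition =ᶠ[nhds t] fun _ => (0:ℝ) :=
        Filter.eventually_of_mem (Iio_mem_nhds h0)
          (fun y hy => Real.smoothTransition.zero_of_nonpos hy.le)
      rw [Filter.EventuallyEq.deriv_eq hev]
      simp
    · push_neg at h1
      have hev : Real.smoothTransition =ᶠ[nhds t] fun _ => (1:ℝ) :=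
        Filter.eventually_of_mem (Ioi_mem_nhds h1)
          (fun y hy => Real.smoothTransition.one_of_one_le hy.le)
      rw [Filter.EventuallyEq.deriv_eq hev]
      simp
  obtain ⟨C, hC⟩ := hcont.bounded_above_of_compact_support hsupp
  exact ⟨max C 0, le_max_right _ _, fun t =>
    (Real.norm_eq_abs _ ▸ hC t).trans (le_max_left _ _)⟩



variable {N : ℕ}

/-- a smooth radial cutoff vanishing on the ball of radius `s` around `p`,
equal to `1` outside the ball of radius `(3/2) * s`. -/
def cutChi (p : En N) (s : ℝ) : En N → ℝ := fun x =>
  Real.smoothTransition ((((5:ℝ)/4) * s^2)⁻¹ * (‖x - p‖^2 - s^2))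

lemma cutChi_contDiff (p : En N) (s : ℝ) : ContDiff ℝ 1 (cutChi p s) :=
  Real.smoothTransition.contDiff.comp
    (contDiff_const.mul (((contDiff_id.sub contDiff_const).norm_sq ℝ).sub contDiff_const))

lemma cutChi_nonneg (p : En N) (s : ℝ) (x : En N) : 0 ≤ cutChi p s x :=
  Real.smoothTransition.nonneg _

lemma cutChi_le_one (p : En N) (s : ℝ) (x : En N) : cutChi p s x ≤ 1 :=
  Real.smoothTransition.le_one _

lemma cutChi_zero (p : En N) {s : ℝ} (hs : 0 < s) {x : En N} (hx : ‖x - p‖ ≤ s) :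
    cutChi p s x = 0 := by
  apply Real.smoothTransition.zero_of_nonpos
  have h1 : (0:ℝ) ≤ (((5:ℝ)/4) * s^2)⁻¹ := by positivity
  have h2 : ‖x - p‖^2 - s^2 ≤ 0 := by nlinarith [norm_nonneg (x - p)]
  nlinarith [mul_nonneg h1 (by nlinarith : (0:ℝ) ≤ s^2 - ‖x - p‖^2)]

lemma cutChi_one (p : En N) {s : ℝ} (hs : 0 < s) {x : En N} (hx : 3/2 * s ≤ ‖x - p‖) :
    cutChi p s x = 1 := by
  apply Real.smoothTransition.one_of_one_le
  have hc : (0:ℝ) < ((5:ℝ)/4) * s^2 := by positivity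
  have h2 : ((5:ℝ)/4) * s^2 ≤ ‖x - p‖^2 - s^2 := by
    nlinarith [pow_le_pow_left₀ (by positivity : (0:ℝ) ≤ 3/2 * s) hx 2]
  calc (1:ℝ) = (((5:ℝ)/4) * s^2)⁻¹ * (((5:ℝ)/4) * s^2) := (inv_mul_cancel₀ hc.ne').symm
    _ ≤ (((5:ℝ)/4) * s^2)⁻¹ * (‖x - p‖^2 - s^2) :=
        mul_le_mul_of_nonneg_left h2 (inv_nonneg.2 hc.le)

lemma cutChi_fderiv_zero (p : En N) {s : ℝ} (hs : 0 < s) {x : En N}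
    (hx : ‖x - p‖ < s ∨ 3/2 * s < ‖x - p‖) :
    fderiv ℝ (cutChi p s) x = 0 := by
  have hcont : Continuous fun y : En N => ‖y - p‖ :=
    (continuous_id.sub continuous_const).norm
  rcases hx with hx | hx
  · have hU : IsOpen {y : En N | ‖y - p‖ < s} := isOpen_lt hcont continuous_const
    have hev : cutChi p s =ᶠ[nhds x] fun _ => (0:ℝ) :=
      Filter.eventually_of_mem (hU.mem_nhds hx) (fun y hy => cutChi_zero p hs hy.le)
    rw [Filter.EventuallyEq.fderiv_eq hev]
    simp
  · have hU : IsOpen {y : En N | 3/2 * s < ‖y - p‖} := isOpen_lt continuous_const hcont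
    have hev : cutChi p s =ᶠ[nhds x] fun _ => (1:ℝ) :=
      Filter.eventually_of_mem (hU.mem_nhds hx) (fun y hy => cutChi_one p hs hy.le)
    rw [Filter.EventuallyEq.fderiv_eq hev]
    simp

lemma cutChi_fderiv_bound (p : En N) {s K : ℝ} (hs : 0 < s) (hK0 : 0 ≤ K)
    (hK : ∀ t : ℝ, |deriv Real.smoothTransition t| ≤ K) {x : En N}
    (hx : ‖x - p‖ ≤ 3/2 * s) :
    ‖fderiv ℝ (cutChi p s) x‖ ≤ 3 * K / s := by
  set c : ℝ := ((5:ℝ)/4) * s^2 with hcdef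
  have hc : (0:ℝ) < c := by positivity
  set D : En N →L[ℝ] ℝ := 2 • (innerSL ℝ (x - p)).comp (ContinuousLinearMap.id ℝ (En N))
    with hDdef
  have hin : HasFDerivAt (fun y : En N => ‖y - p‖^2) D x :=
    ((hasFDerivAt_id x).sub_const p).norm_sq
  set gfun : En N → ℝ := fun y => c⁻¹ * (‖y - p‖^2 - s^2) with hgdef
  have hg : HasFDerivAt gfun (c⁻¹ • D) x := (hin.sub_const (s^2)).const_mul c⁻¹
  have hst : HasDerivAt Real.smoothTransition
      (deriv Real.smoothTransition (gfun x)) (gfun x) :=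
    (((Real.smoothTransition.contDiff (n := 1)).differentiable (by simp)).differentiableAt).hasDerivAt
  have hchi : HasFDerivAt (cutChi p s)
      ((deriv Real.smoothTransition (gfun x)) • (c⁻¹ • D)) x :=
    hst.comp_hasFDerivAt x hg
  rw [hchi.fderiv]
  have hDnorm : ‖D‖ ≤ 2 * ‖x - p‖ := by
    rw [hDdef]
    have h1 : (innerSL ℝ (x - p)).comp (ContinuousLinearMap.id ℝ (En N))
        = innerSL ℝ (x - p) := ContinuousLinearMap.comp_id _
    rw [h1, two_smul]
    calc ‖innerSL ℝ (x - p) + innerSL ℝ (x - p)‖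
        ≤ ‖innerSL ℝ (x - p)‖ + ‖innerSL ℝ (x - p)‖ := norm_add_le _ _
      _ = 2 * ‖x - p‖ := by rw [innerSL_apply_norm]; ring
  have h2 : ‖(deriv Real.smoothTransition (gfun x)) • (c⁻¹ • D)‖
      = |deriv Real.smoothTransition (gfun x)| * (|c⁻¹| * ‖D‖) := by
    rw [norm_smul (deriv Real.smoothTransition (gfun x)) (c⁻¹ • D),
      norm_smul c⁻¹ D, Real.norm_eq_abs, Real.norm_eq_abs]
  rw [h2]
  have habs : |c⁻¹| = c⁻¹ := abs_of_pos (inv_pos.2 hc)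
  rw [habs]
  have hstep : |deriv Real.smoothTransition (gfun x)| * (c⁻¹ * ‖D‖)
      ≤ K * (c⁻¹ * (2 * (3/2 * s))) := by
    have hD2 : ‖D‖ ≤ 2 * (3/2 * s) := hDnorm.trans (by nlinarith)
    have : c⁻¹ * ‖D‖ ≤ c⁻¹ * (2 * (3/2 * s)) :=
      mul_le_mul_of_nonneg_left hD2 (inv_nonneg.2 hc.le)
    exact mul_le_mul (hK _) this
      (mul_nonneg (inv_nonneg.2 hc.le) (norm_nonneg _)) hK0
  refine hstep.trans ?_
  have heq : c⁻¹ * (2 * (3/2 * s)) = 12/(5*s) := by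
    rw [hcdef]; field_simp; ring
  rw [heq, show K * (12/(5*s)) = (12*K)/(5*s) from by ring,
    div_le_div_iff₀ (by positivity) hs]
  nlinarith

def cutEta (p : En N) (ε : ℝ) (m : ℕ) : En N → ℝ := fun x =>
  (m : ℝ)⁻¹ * ∑ j ∈ Finset.range m, cutChi p (ε / 2^(j+1)) x

lemma cutEta_contDiff (p : En N) (ε : ℝ) (m : ℕ) : ContDiff ℝ 1 (cutEta p ε m) :=
  contDiff_const.mul (ContDiff.sum fun j _ => cutChi_contDiff p _)

lemma cutEta_nonneg (p : En N) (ε : ℝ) (m : ℕ) (x : En N) : 0 ≤ cutEta p ε m x :=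
  mul_nonneg (by positivity) (Finset.sum_nonneg fun j _ => cutChi_nonneg p _ x)

lemma cutEta_le_one (p : En N) (ε : ℝ) (m : ℕ) (x : En N) : cutEta p ε m x ≤ 1 := by
  rcases Nat.eq_zero_or_pos m with hm | hm
  · simp [cutEta, hm]
  · have h1 : ∑ j ∈ Finset.range m, cutChi p (ε / 2^(j+1)) x ≤ (m : ℝ) := by
      calc ∑ j ∈ Finset.range m, cutChi p (ε / 2^(j+1)) x
          ≤ ∑ j ∈ Finset.range m, (1:ℝ) :=
            Finset.sum_le_sum fun j _ => cutChi_le_one p _ x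
        _ = (m : ℝ) := by simp
    have hm' : (0:ℝ) < (m:ℝ) := by exact_mod_cast hm
    calc cutEta p ε m x ≤ (m : ℝ)⁻¹ * (m : ℝ) :=
          mul_le_mul_of_nonneg_left h1 (by positivity)
      _ = 1 := inv_mul_cancel₀ hm'.ne'

lemma cutEta_zero (p : En N) {ε : ℝ} (hε : 0 < ε) (m : ℕ) {x : En N}
    (hx : ‖x - p‖ ≤ ε / 2^m) : cutEta p ε m x = 0 := by
  unfold cutEta
  have h0 : ∀ j ∈ Finset.range m, cutChi p (ε / 2^(j+1)) x = 0 := by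
    intro j hj
    have hj' : j + 1 ≤ m := Finset.mem_range.1 hj
    refine cutChi_zero p (by positivity) (hx.trans ?_)
    apply div_le_div_of_nonneg_left hε.le (by positivity)
    exact pow_le_pow_right₀ (by norm_num) hj'
  rw [Finset.sum_congr rfl h0]
  simp

lemma cutEta_one (p : En N) {ε : ℝ} (hε : 0 < ε) {m : ℕ} (hm : 1 ≤ m) {x : En N}
    (hx : ε ≤ ‖x - p‖) : cutEta p ε m x = 1 := by
  unfold cutEta
  have h0 : ∀ j ∈ Finset.range m, cutChi p (ε / 2^(j+1)) x = 1 := by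
    intro j hj
    refine cutChi_one p (by positivity) (le_trans ?_ hx)
    have h2 : (2:ℝ) ≤ 2^(j+1) := by
      calc (2:ℝ) = 2^1 := by norm_num
        _ ≤ 2^(j+1) := pow_le_pow_right₀ (by norm_num) (by omega)
    have : ε / 2^(j+1) ≤ ε / 2 := div_le_div_of_nonneg_left hε.le (by norm_num) h2
    nlinarith
  rw [Finset.sum_congr rfl h0]
  have hm' : (0:ℝ) < (m:ℝ) := by exact_mod_cast hm
  simp [inv_mul_cancel₀ hm'.ne']

lemma cutEta_fderiv_pointwise (p : En N) {ε : ℝ} (hε : 0 < ε) {K : ℝ} (hK0 : 0 ≤ K)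
    (hK : ∀ t : ℝ, |deriv Real.smoothTransition t| ≤ K) (m : ℕ) (x : En N) :
    ENNReal.ofReal (‖fderiv ℝ (cutEta p ε m) x‖^2) ≤
      ∑ j ∈ Finset.range m,
        ((closedBall p (3/2 * (ε / 2^(j+1))) \ ball p (ε / 2^(j+1))).indicator
          (fun _ => ENNReal.ofReal ((3*K/(ε / 2^(j+1)))^2 / (m:ℝ)^2)) x) := by
  set s : ℕ → ℝ := fun j => ε / 2^(j+1) with hsdef
  have hsj : ∀ j, 0 < s j := fun j => by positivity
  have hanti : ∀ a b : ℕ, a ≤ b → s b ≤ s a := by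
    intro a b hab
    apply div_le_div_of_nonneg_left hε.le (by positivity)
    exact pow_le_pow_right₀ (by norm_num) (by omega)
  have hstep : ∀ j : ℕ, s (j+1) = s j / 2 := by
    intro j
    show ε / 2^(j+2) = (ε / 2^(j+1)) / 2
    rw [div_div, ← pow_succ]
  have hmem : ∀ j, x ∈ closedBall p (3/2 * s j) \ ball p (s j) ↔
      (s j ≤ ‖x - p‖ ∧ ‖x - p‖ ≤ 3/2 * s j) := by
    intro j
    simp only [mem_diff, mem_closedBall, mem_ball, dist_eq_norm, not_lt]
    tauto
  have hdiff : ∀ j ∈ Finset.range m, DifferentiableAt ℝ (fun y => cutChi p (s j) y) x :=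
    fun j _ => ((cutChi_contDiff p (s j)).differentiable (by simp)).differentiableAt
  have hder : fderiv ℝ (cutEta p ε m) x
      = (m:ℝ)⁻¹ • ∑ j ∈ Finset.range m, fderiv ℝ (cutChi p (s j)) x := by
    unfold cutEta
    rw [fderiv_const_mul (DifferentiableAt.fun_sum hdiff), fderiv_fun_sum hdiff]
  by_cases hex : ∃ j ∈ Finset.range m, x ∈ closedBall p (3/2 * s j) \ ball p (s j)
  · obtain ⟨j₀, hj₀m, hj₀⟩ := hex
    obtain ⟨hj₀1, hj₀2⟩ := (hmem j₀).1 hj₀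
    have hm1 : 1 ≤ m := by
      rcases Nat.eq_zero_or_pos m with h | h
      · exact absurd hj₀m (by simp [h])
      · exact h
    have hm' : (0:ℝ) < (m:ℝ) := by exact_mod_cast hm1
    have hsum : ∑ j ∈ Finset.range m, fderiv ℝ (cutChi p (s j)) x
        = fderiv ℝ (cutChi p (s j₀)) x := by
      refine Finset.sum_eq_single_of_mem j₀ hj₀m ?_
      intro j hj hne
      refine cutChi_fderiv_zero p (hsj j) ?_
      rcases lt_or_gt_of_ne hne with hlt | hgt
      · -- j < j₀ : ‖x-p‖ ≤ 3/2 s j₀ ≤ 3/4 s j < s j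
        left
        have h1 : s j₀ ≤ s (j+1) := hanti _ _ (by omega)
        have h2 : s (j+1) = s j / 2 := hstep j
        nlinarith [hsj j, hj₀2]
      · -- j₀ < j : 3/2 s j ≤ 3/4 s j₀ < s j₀ ≤ ‖x-p‖
        right
        have h1 : s j ≤ s (j₀+1) := hanti _ _ (by omega)
        have h2 : s (j₀+1) = s j₀ / 2 := hstep j₀
        nlinarith [hsj j₀, hj₀1]
    have hbound : ‖fderiv ℝ (cutChi p (s j₀)) x‖ ≤ 3*K/(s j₀) :=
      cutChi_fderiv_bound p (hsj j₀) hK0 hK hj₀2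
    have hLHS : ‖fderiv ℝ (cutEta p ε m) x‖^2 ≤ (3*K/(s j₀))^2 / (m:ℝ)^2 := by
      rw [hder, hsum, norm_smul, Real.norm_eq_abs, abs_of_nonneg (by positivity : (0:ℝ) ≤ (m:ℝ)⁻¹)]
      rw [mul_pow, inv_pow, inv_mul_eq_div]
      gcongr
    calc ENNReal.ofReal (‖fderiv ℝ (cutEta p ε m) x‖^2)
        ≤ ENNReal.ofReal ((3*K/(s j₀))^2 / (m:ℝ)^2) := ENNReal.ofReal_le_ofReal hLHS
      _ = (closedBall p (3/2 * s j₀) \ ball p (s j₀)).indicator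
            (fun _ => ENNReal.ofReal ((3*K/(s j₀))^2 / (m:ℝ)^2)) x := by
            rw [Set.indicator_of_mem hj₀]
      _ ≤ _ := Finset.single_le_sum
            (f := fun j => (closedBall p (3/2 * s j) \ ball p (s j)).indicator
              (fun _ => ENNReal.ofReal ((3*K/(s j))^2 / (m:ℝ)^2)) x)
            (fun j _ => zero_le) hj₀m
  · push_neg at hex
    have h0 : ∀ j ∈ Finset.range m, fderiv ℝ (cutChi p (s j)) x = 0 := by
      intro j hj
      refine cutChi_fderiv_zero p (hsj j) ?_
      have := hex j hj
      rw [hmem j] at this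
      rcases not_and_or.1 this with h | h
      · left; exact not_le.1 h
      · right; exact not_le.1 h
    rw [hder, Finset.sum_congr rfl h0]
    simp

lemma cutEta_energy {n : ℕ} (hn : 2 ≤ n) {Λ : ℝ} (hΛ : 0 < Λ) (μ : Measure (En N))
    (hgrowth : ∀ (x : En N) (r : ℝ), 0 < r → r ≤ 1 →
        μ (ball x r) ≤ ENNReal.ofReal (Λ * r ^ n))
    (p : En N) {ε : ℝ} (hε : 0 < ε) (hε2 : ε ≤ 1/2) {K : ℝ} (hK0 : 0 ≤ K)
    (hK : ∀ t : ℝ, |deriv Real.smoothTransition t| ≤ K) {m : ℕ} (hm : 1 ≤ m) :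
    ∫⁻ x, ENNReal.ofReal (‖fderiv ℝ (cutEta p ε m) x‖^2) ∂μ
      ≤ ENNReal.ofReal ((Λ * (3*K)^2 * 2^n) / m) := by
  set s : ℕ → ℝ := fun j => ε / 2^(j+1) with hsdef
  have hsj : ∀ j, 0 < s j := fun j => by positivity
  have hm' : (0:ℝ) < (m:ℝ) := by exact_mod_cast hm
  have hs1 : ∀ j, s j ≤ 1/4 := by
    intro j
    have h2 : (2:ℝ) ≤ 2^(j+1) := by
      calc (2:ℝ) = 2^1 := by norm_num
        _ ≤ 2^(j+1) := pow_le_pow_right₀ (by norm_num) (by omega)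
    have : ε / 2^(j+1) ≤ ε / 2 := div_le_div_of_nonneg_left hε.le (by norm_num) h2
    nlinarith
  calc ∫⁻ x, ENNReal.ofReal (‖fderiv ℝ (cutEta p ε m) x‖^2) ∂μ
      ≤ ∫⁻ x, ∑ j ∈ Finset.range m,
          ((closedBall p (3/2 * s j) \ ball p (s j)).indicator
            (fun _ => ENNReal.ofReal ((3*K/(s j))^2 / (m:ℝ)^2)) x) ∂μ :=
        lintegral_mono (cutEta_fderiv_pointwise p hε hK0 hK m)
    _ = ∑ j ∈ Finset.range m, ∫⁻ x,
          ((closedBall p (3/2 * s j) \ ball p (s j)).indicator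
            (fun _ => ENNReal.ofReal ((3*K/(s j))^2 / (m:ℝ)^2)) x) ∂μ := by
        refine lintegral_finset_sum _ fun j _ => ?_
        exact Measurable.indicator measurable_const
          (measurableSet_closedBall.diff measurableSet_ball)
    _ = ∑ j ∈ Finset.range m, ENNReal.ofReal ((3*K/(s j))^2 / (m:ℝ)^2)
          * μ (closedBall p (3/2 * s j) \ ball p (s j)) := by
        refine Finset.sum_congr rfl fun j _ => ?_
        exact lintegral_indicator_const (measurableSet_closedBall.diff measurableSet_ball) _
    _ ≤ ∑ j ∈ Finset.range m, ENNReal.ofReal ((Λ * (3*K)^2 * 2^n) / (m:ℝ)^2) := by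
        refine Finset.sum_le_sum fun j _ => ?_
        have hμA : μ (closedBall p (3/2 * s j) \ ball p (s j))
            ≤ ENNReal.ofReal (Λ * (2 * s j)^n) := by
          refine le_trans (measure_mono ?_) (hgrowth p (2 * s j) (by positivity) ?_)
          · refine (Set.diff_subset).trans (closedBall_subset_ball ?_)
            nlinarith [hsj j]
          · nlinarith [hs1 j, hsj j]
        calc ENNReal.ofReal ((3*K/(s j))^2 / (m:ℝ)^2)
              * μ (closedBall p (3/2 * s j) \ ball p (s j))
            ≤ ENNReal.ofReal ((3*K/(s j))^2 / (m:ℝ)^2) * ENNReal.ofReal (Λ * (2 * s j)^n) :=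
              mul_le_mul_right hμA _
          _ = ENNReal.ofReal (((3*K/(s j))^2 / (m:ℝ)^2) * (Λ * (2 * s j)^n)) :=
              (ENNReal.ofReal_mul (by positivity)).symm
          _ ≤ ENNReal.ofReal ((Λ * (3*K)^2 * 2^n) / (m:ℝ)^2) := by
              apply ENNReal.ofReal_le_ofReal
              have hsne : (s j) ≠ 0 := (hsj j).ne'
              have hpow : (s j)^n = (s j)^2 * (s j)^(n-2) := by
                rw [← pow_add]
                congr 1
                omega
              have hsle : (s j)^(n-2) ≤ 1 :=
                pow_le_one₀ (hsj j).le (by nlinarith [hs1 j])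
              have hkey : (3*K/(s j))^2 * (Λ * (2 * s j)^n) ≤ Λ * (3*K)^2 * 2^n := by
                have expand : (3*K/(s j))^2 * (Λ * (2 * s j)^n)
                    = Λ * (3*K)^2 * 2^n * (s j)^(n-2) := by
                  rw [mul_pow (2:ℝ) (s j) n, hpow, div_pow]
                  field_simp
                rw [expand]
                have hC0 : (0:ℝ) ≤ Λ * (3*K)^2 * 2^n := by positivity
                nlinarith [mul_le_of_le_one_right hC0 hsle]
              calc (3*K/(s j))^2 / (m:ℝ)^2 * (Λ * (2 * s j)^n)
                  = ((3*K/(s j))^2 * (Λ * (2 * s j)^n)) / (m:ℝ)^2 := by ring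
                _ ≤ (Λ * (3*K)^2 * 2^n) / (m:ℝ)^2 := by gcongr
    _ = (m : ℝ≥0∞) * ENNReal.ofReal ((Λ * (3*K)^2 * 2^n) / (m:ℝ)^2) := by
        rw [Finset.sum_const, Finset.card_range, nsmul_eq_mul]
    _ = ENNReal.ofReal ((Λ * (3*K)^2 * 2^n) / m) := by
        rw [← ENNReal.ofReal_natCast m, ← ENNReal.ofReal_mul (by positivity)]
        congr 1
        field_simp


set_option maxHeartbeats 2000000

/-- **Weak stability in a ball implies strong stability in a smaller concentric ball**
(Remark 2.6 of the paper: dichotomy plus capacity argument, for measures with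
`n`-dimensional volume growth, `n ≥ 2`). -/
theorem weak_implies_strong_smaller_ball
    (N n : ℕ) (hN : 1 ≤ N) (hn : 2 ≤ n) (Λ : ℝ) (hΛ : 0 < Λ)
    (μ : Measure (En N)) [IsLocallyFiniteMeasure μ]
    (hgrowth : ∀ (x : En N) (r : ℝ), 0 < r → r ≤ 1 →
        μ (ball x r) ≤ ENNReal.ofReal (Λ * r ^ n))
    (g : En N → ℝ≥0∞) (hg : Measurable g)
    (p : En N) (R : ℝ) (hR : 0 < R) (hR1 : R ≤ 1)
    (hweak : weakStab N μ g (ball p R)) :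
    ∃ r : ℝ, 0 < r ∧ r < R ∧ strongStab N μ g (ball p r) := by
  by_contra hcon
  push_neg at hcon
  -- every smaller concentric ball carries a failing test function
  have hfail : ∀ ρ : ℝ, 0 < ρ → ρ < R → ∃ φ : En N → ℝ, ContDiff ℝ 1 φ ∧
      HasCompactSupport φ ∧ tsupport φ ⊆ ball p ρ ∧
      (∫⁻ x, ENNReal.ofReal (‖fderiv ℝ φ x‖ ^ 2) ∂μ)
        < (∫⁻ x, g x * ENNReal.ofReal (φ x ^ 2) ∂μ) := by
    intro ρ h1 h2
    have h3 := hcon ρ h1 h2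
    unfold strongStab at h3
    push_neg at h3
    obtain ⟨φ, ha, hb, hc, hd⟩ := h3
    exact ⟨φ, ha, hb, hc, hd⟩
  -- annulus stability : strong stability away from any small concentric ball
  have hann : ∀ ρ : ℝ, 0 < ρ → ρ < R → ∀ ψ : En N → ℝ, ContDiff ℝ 1 ψ →
      HasCompactSupport ψ → tsupport ψ ⊆ ball p R → (∀ y ∈ ball p ρ, ψ y = 0) →
      (∫⁻ x, g x * ENNReal.ofReal (ψ x ^ 2) ∂μ)
        ≤ ∫⁻ x, ENNReal.ofReal (‖fderiv ℝ ψ x‖ ^ 2) ∂μ := by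
    intro ρ hρ0 hρR ψ hψc hψcs hψsupp hψzero
    obtain ⟨φ₀, hφ₀c, hφ₀cs, hφ₀supp, hlt⟩ := hfail ρ hρ0 hρR
    have hφ₀suppR : tsupport φ₀ ⊆ ball p R := hφ₀supp.trans (ball_subset_ball hρR.le)
    have hI : (∫ x, φ₀ x ∂μ) ≠ 0 := by
      intro h0
      exact absurd (hweak φ₀ hφ₀c hφ₀cs hφ₀suppR h0) (not_le.2 hlt)
    set sc : ℝ := -(∫ x, ψ x ∂μ) / (∫ x, φ₀ x ∂μ) with hscdef
    set χ : En N → ℝ := fun x => ψ x + sc * φ₀ x with hχdef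
    have hχc : ContDiff ℝ 1 χ := hψc.add (contDiff_const.mul hφ₀c)
    have hχcs : HasCompactSupport χ := by
      have hsub : tsupport χ ⊆ tsupport ψ ∪ tsupport φ₀ := by
        refine closure_minimal ?_
          ((isClosed_tsupport ψ).union (isClosed_tsupport φ₀))
        intro x hx
        by_contra hcm
        simp only [Set.mem_union, not_or] at hcm
        have h1 : ψ x = 0 := image_eq_zero_of_notMem_tsupport hcm.1
        have h2 : φ₀ x = 0 := image_eq_zero_of_notMem_tsupport hcm.2
        have : χ x = 0 := by simp [hχdef, h1, h2]
        exact hx this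
      exact IsCompact.of_isClosed_subset (hψcs.union hφ₀cs) (isClosed_tsupport χ) hsub
    have hχsupp : tsupport χ ⊆ ball p R := by
      have hsub : tsupport χ ⊆ tsupport ψ ∪ tsupport φ₀ := by
        refine closure_minimal ?_
          ((isClosed_tsupport ψ).union (isClosed_tsupport φ₀))
        intro x hx
        by_contra hcm
        simp only [Set.mem_union, not_or] at hcm
        have h1 : ψ x = 0 := image_eq_zero_of_notMem_tsupport hcm.1
        have h2 : φ₀ x = 0 := image_eq_zero_of_notMem_tsupport hcm.2
        have : χ x = 0 := by simp [hχdef, h1, h2]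
        exact hx this
      exact hsub.trans (Set.union_subset hψsupp hφ₀suppR)
    have hiψ : Integrable ψ μ := hψc.continuous.integrable_of_hasCompactSupport hψcs
    have hiφ : Integrable φ₀ μ := hφ₀c.continuous.integrable_of_hasCompactSupport hφ₀cs
    have hχint : (∫ x, χ x ∂μ) = 0 := by
      have : (∫ x, χ x ∂μ) = (∫ x, ψ x ∂μ) + sc * ∫ x, φ₀ x ∂μ := by
        rw [hχdef]
        rw [integral_add hiψ (hiφ.const_mul sc), integral_const_mul]
      rw [this, hscdef, div_mul_cancel₀ _ hI]
      ring
    have hw := hweak χ hχc hχcs hχsupp hχint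
    -- pointwise decompositions
    have hval : ∀ x, ENNReal.ofReal (χ x ^ 2)
        = ENNReal.ofReal (ψ x ^ 2) + ENNReal.ofReal (sc ^ 2) * ENNReal.ofReal (φ₀ x ^ 2) := by
      intro x
      have h0 : φ₀ x * ψ x = 0 := by
        by_cases hx : x ∈ tsupport φ₀
        · rw [hψzero x (hφ₀supp hx), mul_zero]
        · rw [image_eq_zero_of_notMem_tsupport hx, zero_mul]
      have h1 : χ x ^ 2 = ψ x ^ 2 + sc ^ 2 * φ₀ x ^ 2 := by
        simp only [hχdef]
        linear_combination (2 * sc) * h0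
      rw [h1, ENNReal.ofReal_add (sq_nonneg _) (by positivity),
        ENNReal.ofReal_mul (sq_nonneg sc)]
    have hgrad : ∀ x, ENNReal.ofReal (‖fderiv ℝ χ x‖ ^ 2)
        = ENNReal.ofReal (‖fderiv ℝ ψ x‖ ^ 2)
          + ENNReal.ofReal (sc ^ 2) * ENNReal.ofReal (‖fderiv ℝ φ₀ x‖ ^ 2) := by
      intro x
      have hd : fderiv ℝ χ x = fderiv ℝ ψ x + sc • fderiv ℝ φ₀ x := by
        rw [hχdef]
        rw [fderiv_fun_add ((hψc.differentiable (by simp)).differentiableAt)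
          (((hφ₀c.differentiable (by simp)).differentiableAt).const_mul sc),
          fderiv_const_mul ((hφ₀c.differentiable (by simp)).differentiableAt)]
      by_cases hx : x ∈ tsupport φ₀
      · have hψ0 : fderiv ℝ ψ x = 0 := by
          have hev : ψ =ᶠ[nhds x] fun _ => (0:ℝ) :=
            Filter.eventually_of_mem (isOpen_ball.mem_nhds (hφ₀supp hx)) hψzero
          rw [Filter.EventuallyEq.fderiv_eq hev]
          simp
        rw [hd, hψ0, zero_add, norm_smul, Real.norm_eq_abs, mul_pow, sq_abs]
        simp [ENNReal.ofReal_mul (sq_nonneg sc)]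
      · have hφ0 : fderiv ℝ φ₀ x = 0 := by
          by_contra hne
          exact hx (support_fderiv_subset ℝ (Function.mem_support.2 hne))
        rw [hd, hφ0, smul_zero, add_zero]
        simp
    -- integral decompositions
    have hmψ : Measurable fun x => g x * ENNReal.ofReal (ψ x ^ 2) :=
      hg.mul ((hψc.continuous.pow 2).measurable.ennreal_ofReal)
    have hmφ : Measurable fun x => g x * ENNReal.ofReal (φ₀ x ^ 2) :=
      hg.mul ((hφ₀c.continuous.pow 2).measurable.ennreal_ofReal)
    have hmψ' : Measurable fun x => ENNReal.ofReal (‖fderiv ℝ ψ x‖ ^ 2) :=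
      (((hψc.continuous_fderiv (by simp)).norm.pow 2).measurable).ennreal_ofReal
    have hmφ' : Measurable fun x => ENNReal.ofReal (‖fderiv ℝ φ₀ x‖ ^ 2) :=
      (((hφ₀c.continuous_fderiv (by simp)).norm.pow 2).measurable).ennreal_ofReal
    have hLHS : (∫⁻ x, g x * ENNReal.ofReal (χ x ^ 2) ∂μ)
        = (∫⁻ x, g x * ENNReal.ofReal (ψ x ^ 2) ∂μ)
          + ENNReal.ofReal (sc ^ 2) * ∫⁻ x, g x * ENNReal.ofReal (φ₀ x ^ 2) ∂μ := by
      rw [← lintegral_const_mul _ hmφ, ← lintegral_add_left hmψ]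
      refine lintegral_congr fun x => ?_
      rw [hval x]
      ring
    have hRHS : (∫⁻ x, ENNReal.ofReal (‖fderiv ℝ χ x‖ ^ 2) ∂μ)
        = (∫⁻ x, ENNReal.ofReal (‖fderiv ℝ ψ x‖ ^ 2) ∂μ)
          + ENNReal.ofReal (sc ^ 2) * ∫⁻ x, ENNReal.ofReal (‖fderiv ℝ φ₀ x‖ ^ 2) ∂μ := by
      rw [← lintegral_const_mul _ hmφ', ← lintegral_add_left hmψ']
      refine lintegral_congr fun x => ?_
      rw [hgrad x]
    rw [hLHS, hRHS] at hw
    exact ennreal_cancel ENNReal.ofReal_ne_top hlt hw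
  -- the capacity argument : strong stability on the ball of radius R/2, contradiction
  obtain ⟨K, hK0, hK⟩ := exists_smoothTransition_deriv_bound
  set C : ℝ := Λ * (3 * K) ^ 2 * 2 ^ n with hCdef
  refine absurd ?_ (hcon (R / 2) (by linarith) (by linarith))
  intro φ hφ1 hφ2 hφ3
  set D := ∫⁻ x, ENNReal.ofReal (‖fderiv ℝ φ x‖ ^ 2) ∂μ with hDdef
  obtain ⟨M, hM⟩ := hφ1.continuous.bounded_above_of_compact_support hφ2
  have hM0 : 0 ≤ M := (norm_nonneg _).trans (hM p)
  have hMabs : ∀ x, |φ x| ≤ M := fun x => (Real.norm_eq_abs (φ x)) ▸ hM x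
  set ε₀ : ℝ := min (1 / 2) (R / 2) with hε₀def
  have hε₀ : 0 < ε₀ := lt_min (by norm_num) (by linarith)
  have hε₀R : ε₀ ≤ R / 2 := min_le_right _ _
  have hε₀2 : ε₀ ≤ 1 / 2 := min_le_left _ _
  have hmD : Measurable fun x => ENNReal.ofReal (‖fderiv ℝ φ x‖ ^ 2) :=
    (((hφ1.continuous_fderiv (by simp)).norm.pow 2).measurable).ennreal_ofReal
  have hmh : Measurable fun x => g x * ENNReal.ofReal (φ x ^ 2) :=
    hg.mul ((hφ1.continuous.pow 2).measurable.ennreal_ofReal)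
  have key : ∀ k : ℕ,
      (∫⁻ x, ((ball p (ε₀ / ((k:ℝ) + 1)))ᶜ).indicator
        (fun x => g x * ENNReal.ofReal (φ x ^ 2)) x ∂μ) ≤ D := by
    intro k
    set ε : ℝ := ε₀ / ((k:ℝ) + 1) with hεdef
    have hε : 0 < ε := by positivity
    have hεε₀ : ε ≤ ε₀ := by
      rw [hεdef]
      exact div_le_self hε₀.le (by linarith [(Nat.cast_nonneg k : (0:ℝ) ≤ (k:ℝ))])
    have hε2 : ε ≤ 1 / 2 := hεε₀.trans hε₀2
    have hstep : ∀ τ : ℝ, 0 < τ → ∀ m : ℕ,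
        (∫⁻ x, ((ball p ε)ᶜ).indicator (fun x => g x * ENNReal.ofReal (φ x ^ 2)) x ∂μ)
          ≤ ENNReal.ofReal (1 + τ) * D
            + ENNReal.ofReal ((1 + 1 / τ) * M ^ 2) * ENNReal.ofReal (C / ((m:ℝ) + 1)) := by
      intro τ hτ m
      set η := cutEta p ε (m + 1) with hηdef
      have hηc : ContDiff ℝ 1 η := cutEta_contDiff p ε (m + 1)
      set ψ : En N → ℝ := fun x => φ x * η x with hψdef
      have hψc : ContDiff ℝ 1 ψ := hφ1.mul hηc
      have hψcs : HasCompactSupport ψ := hφ2.mul_right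
      have hψsupp : tsupport ψ ⊆ ball p R :=
        (tsupport_mul_subset_left).trans (hφ3.trans (ball_subset_ball (by linarith)))
      set ρ : ℝ := ε / 2 ^ (m + 1) with hρdef
      have hρ0 : 0 < ρ := by positivity
      have hρR : ρ < R := by
        have h1 : ρ ≤ ε := by
          rw [hρdef]
          exact div_le_self hε.le (one_le_pow₀ (by norm_num))
        have : ε₀ < R := lt_of_le_of_lt hε₀R (by linarith)
        linarith [hεε₀]
      have hψzero : ∀ y ∈ ball p ρ, ψ y = 0 := by
        intro y hy
        rw [mem_ball, dist_eq_norm] at hy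
        have h0 : η y = 0 := cutEta_zero p hε (m + 1) hy.le
        simp [hψdef, h0]
      have hst := hann ρ hρ0 hρR ψ hψc hψcs hψsupp hψzero
      have hmη : Measurable fun x => ENNReal.ofReal (‖fderiv ℝ η x‖ ^ 2) :=
        (((hηc.continuous_fderiv (by simp)).norm.pow 2).measurable).ennreal_ofReal
      have hlow : (∫⁻ x, ((ball p ε)ᶜ).indicator
            (fun x => g x * ENNReal.ofReal (φ x ^ 2)) x ∂μ)
          ≤ ∫⁻ x, g x * ENNReal.ofReal (ψ x ^ 2) ∂μ := by
        refine lintegral_mono fun x => ?_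
        by_cases hx : x ∈ (ball p ε)ᶜ
        · rw [Set.indicator_of_mem hx]
          have hx' : ε ≤ ‖x - p‖ := by
            rw [Set.mem_compl_iff, mem_ball, dist_eq_norm, not_lt] at hx
            exact hx
          have h1 : η x = 1 := cutEta_one p hε (by omega) hx'
          exact le_of_eq (by simp [hψdef, h1])
        · rw [Set.indicator_of_notMem hx]
          exact zero_le
      have hup : ∀ x, ENNReal.ofReal (‖fderiv ℝ ψ x‖ ^ 2)
          ≤ ENNReal.ofReal (1 + τ) * ENNReal.ofReal (‖fderiv ℝ φ x‖ ^ 2)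
            + ENNReal.ofReal ((1 + 1 / τ) * M ^ 2)
              * ENNReal.ofReal (‖fderiv ℝ η x‖ ^ 2) := by
        intro x
        have hd : fderiv ℝ ψ x = φ x • fderiv ℝ η x + η x • fderiv ℝ φ x := by
          rw [hψdef]
          exact fderiv_mul ((hφ1.differentiable (by simp)).differentiableAt)
            ((hηc.differentiable (by simp)).differentiableAt)
        set a := ‖fderiv ℝ φ x‖ with hadef
        set b := ‖fderiv ℝ η x‖ with hbdef
        have ha : 0 ≤ a := norm_nonneg _
        have hb : 0 ≤ b := norm_nonneg _
        have hnorm : ‖fderiv ℝ ψ x‖ ≤ a + M * b := by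
          rw [hd]
          refine (norm_add_le _ _).trans ?_
          rw [norm_smul, norm_smul, Real.norm_eq_abs, Real.norm_eq_abs]
          have h1 : |φ x| * b ≤ M * b := mul_le_mul_of_nonneg_right (hMabs x) hb
          have h2 : |η x| * a ≤ 1 * a := by
            refine mul_le_mul_of_nonneg_right ?_ ha
            rw [abs_of_nonneg (cutEta_nonneg p ε (m + 1) x)]
            exact cutEta_le_one p ε (m + 1) x
          linarith
        have hreal : ‖fderiv ℝ ψ x‖ ^ 2
            ≤ (1 + τ) * a ^ 2 + ((1 + 1 / τ) * M ^ 2) * b ^ 2 := by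
          set β := M * b with hβdef
          have hβ : 0 ≤ β := mul_nonneg hM0 hb
          have h2 : 2 * a * β ≤ τ * a ^ 2 + β ^ 2 / τ := by
            rw [← sub_nonneg]
            have heq : τ * a ^ 2 + β ^ 2 / τ - 2 * a * β = (τ * a - β) ^ 2 / τ := by
              field_simp
              ring
            rw [heq]
            positivity
          have hkey : (a + β) ^ 2 ≤ (1 + τ) * a ^ 2 + (1 + 1 / τ) * β ^ 2 := by
            have h3 : (1 + 1 / τ) * β ^ 2 = β ^ 2 + β ^ 2 / τ := by
              field_simp
            nlinarith [h2]
          have hsq : ‖fderiv ℝ ψ x‖ ^ 2 ≤ (a + β) ^ 2 :=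
            pow_le_pow_left₀ (norm_nonneg _) hnorm 2
          have hβ2 : (1 + 1 / τ) * β ^ 2 = ((1 + 1 / τ) * M ^ 2) * b ^ 2 := by
            rw [hβdef]
            ring
          linarith [hsq, hkey, hβ2.le, hβ2.ge]
        calc ENNReal.ofReal (‖fderiv ℝ ψ x‖ ^ 2)
            ≤ ENNReal.ofReal ((1 + τ) * a ^ 2 + ((1 + 1 / τ) * M ^ 2) * b ^ 2) :=
              ENNReal.ofReal_le_ofReal hreal
          _ = ENNReal.ofReal ((1 + τ) * a ^ 2)
              + ENNReal.ofReal (((1 + 1 / τ) * M ^ 2) * b ^ 2) :=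
              ENNReal.ofReal_add (by positivity) (by positivity)
          _ = ENNReal.ofReal (1 + τ) * ENNReal.ofReal (a ^ 2)
              + ENNReal.ofReal ((1 + 1 / τ) * M ^ 2) * ENNReal.ofReal (b ^ 2) := by
              rw [ENNReal.ofReal_mul (by positivity), ENNReal.ofReal_mul (by positivity)]
      have henergy : (∫⁻ x, ENNReal.ofReal (‖fderiv ℝ η x‖ ^ 2) ∂μ)
          ≤ ENNReal.ofReal (C / ((m:ℝ) + 1)) := by
        have := cutEta_energy hn hΛ μ hgrowth p hε hε2 hK0 hK
          (m := m + 1) (by omega)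
        rw [hCdef]
        convert this using 3
        push_cast
        ring
      calc (∫⁻ x, ((ball p ε)ᶜ).indicator
              (fun x => g x * ENNReal.ofReal (φ x ^ 2)) x ∂μ)
          ≤ ∫⁻ x, g x * ENNReal.ofReal (ψ x ^ 2) ∂μ := hlow
        _ ≤ ∫⁻ x, ENNReal.ofReal (‖fderiv ℝ ψ x‖ ^ 2) ∂μ := hst
        _ ≤ ∫⁻ x, (ENNReal.ofReal (1 + τ) * ENNReal.ofReal (‖fderiv ℝ φ x‖ ^ 2)
              + ENNReal.ofReal ((1 + 1 / τ) * M ^ 2)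
                * ENNReal.ofReal (‖fderiv ℝ η x‖ ^ 2)) ∂μ := lintegral_mono hup
        _ = ENNReal.ofReal (1 + τ) * D
              + ENNReal.ofReal ((1 + 1 / τ) * M ^ 2)
                * ∫⁻ x, ENNReal.ofReal (‖fderiv ℝ η x‖ ^ 2) ∂μ := by
            rw [lintegral_add_left (hmD.const_mul _), lintegral_const_mul _ hmD,
              lintegral_const_mul _ hmη]
        _ ≤ ENNReal.ofReal (1 + τ) * D
              + ENNReal.ofReal ((1 + 1 / τ) * M ^ 2)
                * ENNReal.ofReal (C / ((m:ℝ) + 1)) := by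
            exact add_le_add_right (mul_le_mul_right henergy _) _
    have hτlim : ∀ τ : ℝ, 0 < τ →
        (∫⁻ x, ((ball p ε)ᶜ).indicator (fun x => g x * ENNReal.ofReal (φ x ^ 2)) x ∂μ)
          ≤ ENNReal.ofReal (1 + τ) * D := by
      intro τ hτ
      have t1 : Filter.Tendsto (fun m : ℕ => C / ((m:ℝ) + 1)) Filter.atTop (nhds 0) := by
        have h0 := (tendsto_const_div_atTop_nhds_zero_nat C).comp
          (Filter.tendsto_add_atTop_nat 1)
        refine h0.congr fun m => ?_
        simp only [Function.comp_apply]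
        push_cast
        ring_nf
      have t2 : Filter.Tendsto (fun m : ℕ => ENNReal.ofReal (C / ((m:ℝ) + 1)))
          Filter.atTop (nhds 0) := by
        have := ENNReal.tendsto_ofReal t1
        rwa [ENNReal.ofReal_zero] at this
      have t3 : Filter.Tendsto
          (fun m : ℕ => ENNReal.ofReal (1 + τ) * D
            + ENNReal.ofReal ((1 + 1 / τ) * M ^ 2) * ENNReal.ofReal (C / ((m:ℝ) + 1)))
          Filter.atTop (nhds (ENNReal.ofReal (1 + τ) * D)) := by
        have t4 := ENNReal.Tendsto.const_mul t2
          (Or.inr (ENNReal.ofReal_ne_top (r := (1 + 1 / τ) * M ^ 2)))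
        rw [mul_zero] at t4
        have t5 := t4.const_add (ENNReal.ofReal (1 + τ) * D)
        rwa [add_zero] at t5
      exact ge_of_tendsto' t3 fun m => hstep τ hτ m
    refine ge_of_tendsto' (x := Filter.atTop) ?_
      (fun j : ℕ => hτlim (1 / ((j:ℝ) + 1)) (by positivity))
    have treal : Filter.Tendsto (fun j : ℕ => 1 + 1 / ((j:ℝ) + 1)) Filter.atTop (nhds 1) := by
      have := tendsto_one_div_add_atTop_nhds_zero_nat.const_add (1:ℝ)
      rwa [add_zero] at this
    have t6 : Filter.Tendsto (fun j : ℕ => ENNReal.ofReal (1 + 1 / ((j:ℝ) + 1)))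
        Filter.atTop (nhds 1) := by
      have := ENNReal.tendsto_ofReal treal
      rwa [ENNReal.ofReal_one] at this
    have t7 := ENNReal.Tendsto.mul_const (b := D) t6 (Or.inl (one_ne_zero))
    rwa [one_mul] at t7
  -- μ has no atom at p
  have hμp : μ ({p} : Set (En N)) = 0 := by
    have hb : ∀ k : ℕ, μ ({p} : Set (En N))
        ≤ ENNReal.ofReal (Λ * (1 / ((k:ℝ) + 1)) ^ n) := by
      intro k
      refine le_trans (measure_mono ?_) (hgrowth p (1 / ((k:ℝ) + 1)) (by positivity) ?_)
      · intro y hy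
        rw [Set.mem_singleton_iff] at hy
        subst hy
        exact mem_ball_self (by positivity)
      · rw [div_le_one (by positivity)]
        linarith [(Nat.cast_nonneg k : (0:ℝ) ≤ (k:ℝ))]
    have htend : Filter.Tendsto (fun k : ℕ => ENNReal.ofReal (Λ * (1 / ((k:ℝ) + 1)) ^ n))
        Filter.atTop (nhds 0) := by
      have t0 : Filter.Tendsto (fun k : ℕ => Λ * (1 / ((k:ℝ) + 1)) ^ n)
          Filter.atTop (nhds 0) := by
        have t1 := (tendsto_one_div_add_atTop_nhds_zero_nat (𝕜 := ℝ)).pow n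
        rw [zero_pow (by omega : n ≠ 0)] at t1
        have t2 := t1.const_mul Λ
        rwa [mul_zero] at t2
      have := ENNReal.tendsto_ofReal t0
      rwa [ENNReal.ofReal_zero] at this
    exact le_zero_iff.1 (ge_of_tendsto' htend hb)
  -- pass to the limit over shrinking removed balls
  set F : ℕ → En N → ℝ≥0∞ := fun k x => ((ball p (ε₀ / ((k:ℝ) + 1)))ᶜ).indicator
    (fun x => g x * ENNReal.ofReal (φ x ^ 2)) x with hFdef
  have hFmeas : ∀ k, Measurable (F k) :=
    fun k => hmh.indicator (measurableSet_ball.compl)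
  have hFmono : Monotone F := by
    intro k l hkl
    have hsub : (ball p (ε₀ / ((k:ℝ) + 1)))ᶜ ⊆ (ball p (ε₀ / ((l:ℝ) + 1)))ᶜ := by
      apply Set.compl_subset_compl.2
      apply ball_subset_ball
      apply div_le_div_of_nonneg_left hε₀.le (by positivity)
      have : (k:ℝ) ≤ (l:ℝ) := Nat.cast_le.2 hkl
      linarith
    exact Set.indicator_le_indicator_of_subset hsub (fun x => zero_le)
  have hsup : ∀ x, (⨆ k, F k x)
      = (({p}ᶜ : Set (En N))).indicator (fun x => g x * ENNReal.ofReal (φ x ^ 2)) x := by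
    intro x
    by_cases hx : x = p
    · subst hx
      have h1 : ∀ k : ℕ, F k x = 0 := by
        intro k
        refine Set.indicator_of_notMem ?_ _
        rw [Set.notMem_compl_iff]
        exact mem_ball_self (by positivity)
      have h2 : x ∉ ({x}ᶜ : Set (En N)) := by simp
      rw [Set.indicator_of_notMem h2]
      simp [h1]
    · have hx' : x ∈ ({p}ᶜ : Set (En N)) := by simpa using hx
      rw [Set.indicator_of_mem hx']
      apply le_antisymm
      · refine iSup_le fun k => ?_
        exact Set.indicator_le_self _ _ x
      · have hd : 0 < dist x p := dist_pos.2 hx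
        obtain ⟨k, hk⟩ := exists_nat_gt (ε₀ / dist x p)
        have hklt : ε₀ / ((k:ℝ) + 1) < dist x p := by
          rw [div_lt_iff₀ (by positivity)]
          have h5 : ε₀ / dist x p < (k:ℝ) + 1 := by linarith
          calc ε₀ = (ε₀ / dist x p) * dist x p := by field_simp
            _ < ((k:ℝ) + 1) * dist x p := by
                exact mul_lt_mul_of_pos_right h5 hd
            _ = dist x p * ((k:ℝ) + 1) := by ring
        have hmem : x ∈ (ball p (ε₀ / ((k:ℝ) + 1)))ᶜ := by
          rw [Set.mem_compl_iff, mem_ball, not_lt]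
          exact hklt.le
        have : F k x = g x * ENNReal.ofReal (φ x ^ 2) := Set.indicator_of_mem hmem _
        rw [← this]
        exact le_iSup (fun k => F k x) k
  have hae : (fun x => g x * ENNReal.ofReal (φ x ^ 2))
      =ᵐ[μ] fun x => (({p}ᶜ : Set (En N))).indicator
        (fun x => g x * ENNReal.ofReal (φ x ^ 2)) x := by
    have h0 : ∀ᵐ x ∂μ, x ∉ ({p} : Set (En N)) := measure_eq_zero_iff_ae_notMem.1 hμp
    filter_upwards [h0] with x hx
    rw [Set.indicator_of_mem (by simpa using hx)]
  calc (∫⁻ x, g x * ENNReal.ofReal (φ x ^ 2) ∂μ)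
      = ∫⁻ x, (({p}ᶜ : Set (En N))).indicator
          (fun x => g x * ENNReal.ofReal (φ x ^ 2)) x ∂μ := lintegral_congr_ae hae
    _ = ∫⁻ x, ⨆ k, F k x ∂μ := lintegral_congr fun x => (hsup x).symm
    _ = ⨆ k, ∫⁻ x, F k x ∂μ := lintegral_iSup hFmeas hFmono
    _ ≤ D := iSup_le key
end
end
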